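/- Fix ρ_p > 0, h > 0, and a point X_T ∈ ℝ² with r_T = |X_T|. For each integer n ≥ 2 let R_n = √(n/(π ρ_p)) and let X_1, …, X_n be i.i.d. random points uniformly distributed on the closed disk of radius R_n centered at the origin in ℝ². Define P_i = 1 if and only if |X_i − X_T| ≥ h and |X_i − X_j| ≥ h for every j ≠ i, and let 𝒜_n be the event that X_1 and X_2 both lie in the annulus {x ∈ ℝ² : r_T + 2h ≤ |x| ≤ R_n − h} and |X_1 − X_2| > 2h. Then lim_{n→∞} Pr(P_1 = 1 and P_2 = 1 | 𝒜_n) = exp(−2π ρ_p h²). -/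

import Mathlib

open MeasureTheory ProbabilityTheory Set Real Filter

/-- The uniform probability measure on the closed disk of radius `R` centered at the
origin of the plane. -/
noncomputable def unifDisk (R : ℝ) : Measure (EuclideanSpace ℝ (Fin 2)) :=
  (volume (Metric.closedBall (0 : EuclideanSpace ℝ (Fin 2)) R))⁻¹ •
    volume.restrict (Metric.closedBall (0 : EuclideanSpace ℝ (Fin 2)) R)

local notation "E" => EuclideanSpace ℝ (Fin 2)

lemma vol_ball' (x : E) (r : ℝ) (hr : 0 ≤ r) :
    volume (Metric.ball x r) = ENNReal.ofReal (π * r ^ 2) := by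
  rw [EuclideanSpace.volume_ball]
  have : Real.Gamma ((Fintype.card (Fin 2) : ℝ) / 2 + 1) = 1 := by
    norm_num [Real.Gamma_two]
  rw [this]
  simp only [Fintype.card_fin]
  rw [sq_sqrt pi_nonneg, ← ENNReal.ofReal_pow hr, ← ENNReal.ofReal_mul (by positivity)]
  ring_nf

lemma vol_cball (x : E) (r : ℝ) (hr : 0 ≤ r) :
    volume (Metric.closedBall x r) = ENNReal.ofReal (π * r ^ 2) := by
  rw [Measure.addHaar_closedBall_eq_addHaar_ball, vol_ball' x r hr]

lemma unifDisk_apply (R : ℝ) (hR : 0 ≤ R) (s : Set E) (hs : MeasurableSet s) :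
    unifDisk R s = (ENNReal.ofReal (π * R ^ 2))⁻¹ * volume (s ∩ Metric.closedBall 0 R) := by
  rw [unifDisk, Measure.smul_apply, Measure.restrict_apply hs, smul_eq_mul, vol_cball _ _ hR]

lemma unifDisk_prob (R : ℝ) (hR : 0 < R) : IsProbabilityMeasure (unifDisk R) := by
  constructor
  rw [unifDisk, Measure.smul_apply, Measure.restrict_apply MeasurableSet.univ, univ_inter,
    smul_eq_mul, ENNReal.inv_mul_cancel]
  · rw [vol_cball _ _ hR.le]
    positivity
  · rw [vol_cball _ _ hR.le]
    exact ENNReal.ofReal_ne_top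

lemma unifDisk_good (R h : ℝ) (hh : 0 < h) (hR : 0 ≤ R) (a b : E)
    (ha : ‖a‖ + h ≤ R) (hb : ‖b‖ + h ≤ R) (hab : 2 * h < dist a b) :
    unifDisk R {x : E | h ≤ dist a x ∧ h ≤ dist b x} =
      (ENNReal.ofReal (π * R ^ 2))⁻¹ * ENNReal.ofReal (π * R ^ 2 - 2 * (π * h ^ 2)) := by
  have hU : {x : E | h ≤ dist a x ∧ h ≤ dist b x} = (Metric.ball a h ∪ Metric.ball b h)ᶜ := by
    ext x
    simp [Metric.mem_ball', not_or, not_lt, dist_comm]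
  have haD : Metric.ball a h ⊆ Metric.closedBall (0 : E) R := by
    refine Metric.ball_subset_closedBall.trans (Metric.closedBall_subset_closedBall' ?_)
    rw [dist_zero_right]; linarith
  have hbD : Metric.ball b h ⊆ Metric.closedBall (0 : E) R := by
    refine Metric.ball_subset_closedBall.trans (Metric.closedBall_subset_closedBall' ?_)
    rw [dist_zero_right]; linarith
  have hdisj : Disjoint (Metric.ball a h) (Metric.ball b h) :=
    Metric.ball_disjoint_ball (by linarith)
  have hmeas : MeasurableSet {x : E | h ≤ dist a x ∧ h ≤ dist b x} := by
    rw [hU]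
    exact (measurableSet_ball.union measurableSet_ball).compl
  rw [unifDisk_apply R hR _ hmeas, hU]
  congr 1
  have : (Metric.ball a h ∪ Metric.ball b h)ᶜ ∩ Metric.closedBall (0 : E) R =
      Metric.closedBall (0 : E) R \ (Metric.ball a h ∪ Metric.ball b h) := by
    rw [Set.diff_eq, Set.inter_comm]
  rw [this, measure_diff (Set.union_subset haD hbD)
      ((measurableSet_ball.union measurableSet_ball).nullMeasurableSet)
      (ne_of_lt (lt_of_le_of_lt (measure_mono (Set.union_subset haD hbD))
        (by rw [vol_cball _ _ hR]; exact ENNReal.ofReal_lt_top))),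
    measure_union hdisj measurableSet_ball, vol_ball' _ _ hh.le, vol_ball' _ _ hh.le,
    vol_cball _ _ hR, ← ENNReal.ofReal_add (by positivity) (by positivity),
    ← ENNReal.ofReal_sub _ (by positivity)]
  ring_nf

lemma map_eq_pi {n : ℕ} {Ω : Type*} [MeasurableSpace Ω] (P : Measure Ω) [IsProbabilityMeasure P]
    (μ : Measure (EuclideanSpace ℝ (Fin 2))) [IsProbabilityMeasure μ]
    (X : Fin n → Ω → E) (hm : ∀ i, Measurable (X i))
    (hindep : iIndepFun X P)
    (hlaw : ∀ i, P.map (X i) = μ) :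
    P.map (fun ω i => X i ω) = Measure.pi (fun _ => μ) := by
  refine (Measure.pi_eq fun s hs => ?_).symm
  rw [Measure.map_apply (measurable_pi_lambda _ hm) (MeasurableSet.univ_pi hs)]
  have hset : (fun ω i => X i ω) ⁻¹' (Set.pi univ s) = ⋂ i ∈ Finset.univ, X i ⁻¹' s i := by
    ext ω; simp [Set.mem_pi]
  rw [hset, hindep.measure_inter_preimage_eq_mul Finset.univ (fun i _ => hs i)]
  exact Finset.prod_congr rfl fun i _ => by rw [← hlaw i, Measure.map_apply (hm i) (hs i)]

lemma pi_two_rest (μ : Measure (EuclideanSpace ℝ (Fin 2))) [IsProbabilityMeasure μ] (n : ℕ)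
    (Φ : Set (EuclideanSpace ℝ (Fin 2) × EuclideanSpace ℝ (Fin 2))) (hΦ : MeasurableSet Φ)
    (C : E → E → Set (EuclideanSpace ℝ (Fin 2)))
    (hCmeas : MeasurableSet {p : (E × E) × E | p.2 ∈ C p.1.1 p.1.2})
    (κ : ENNReal) (hC : ∀ a b, (a, b) ∈ Φ → μ (C a b) = κ) :
    Measure.pi (fun _ : Fin (n + 2) => μ)
      {f | (f 0, f 1) ∈ Φ ∧ ∀ j : Fin n, f j.succ.succ ∈ C (f 0) (f 1)} =
      κ ^ n * (μ.prod μ) Φ := by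
  set piN := Measure.pi (fun _ : Fin n => μ) with hpiN
  set T : Set (E × (E × (Fin n → E))) :=
    {p | (p.1, p.2.1) ∈ Φ ∧ ∀ j : Fin n, p.2.2 j ∈ C p.1 p.2.1} with hT
  have hTmeas : MeasurableSet T := by
    have h1 : MeasurableSet {p : E × (E × (Fin n → E)) | (p.1, p.2.1) ∈ Φ} :=
      (measurable_fst.prodMk (measurable_fst.comp measurable_snd)) hΦ
    have h2 : ∀ j : Fin n, MeasurableSet {p : E × (E × (Fin n → E)) | p.2.2 j ∈ C p.1 p.2.1} :=
      fun j => hCmeas.preimage ((measurable_fst.prodMk (measurable_fst.comp measurable_snd)).prodMk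
        ((measurable_pi_apply j).comp (measurable_snd.comp measurable_snd)))
    have hTeq : T = {p : E × (E × (Fin n → E)) | (p.1, p.2.1) ∈ Φ} ∩
        ⋂ j : Fin n, {p : E × (E × (Fin n → E)) | p.2.2 j ∈ C p.1 p.2.1} := by
      ext p; simp [hT]
    rw [hTeq]
    exact h1.inter (MeasurableSet.iInter h2)
  have key : Measure.pi (fun _ : Fin (n + 2) => μ)
      {f | (f 0, f 1) ∈ Φ ∧ ∀ j : Fin n, f j.succ.succ ∈ C (f 0) (f 1)} =
      (μ.prod (μ.prod piN)) T := by
    have mp0 := measurePreserving_piFinSuccAbove (fun _ : Fin (n + 2) => μ) 0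
    have mp1 := measurePreserving_piFinSuccAbove (fun _ : Fin (n + 1) => μ) 0
    have mp : MeasurePreserving
        (Prod.map (id : E → E) (MeasurableEquiv.piFinSuccAbove (fun _ : Fin (n + 1) => E) 0) ∘
          (MeasurableEquiv.piFinSuccAbove (fun _ : Fin (n + 2) => E) 0))
        (Measure.pi (fun _ : Fin (n + 2) => μ)) (μ.prod (μ.prod piN)) :=
      (MeasurePreserving.prod (MeasurePreserving.id μ) mp1).comp mp0
    have hpre : {f : Fin (n + 2) → E | (f 0, f 1) ∈ Φ ∧ ∀ j : Fin n, f j.succ.succ ∈ C (f 0) (f 1)} =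
        (Prod.map (id : E → E) (MeasurableEquiv.piFinSuccAbove (fun _ : Fin (n + 1) => E) 0) ∘
          (MeasurableEquiv.piFinSuccAbove (fun _ : Fin (n + 2) => E) 0)) ⁻¹' T := by
      ext f
      simp only [hT, Set.mem_preimage, Function.comp_apply, Prod.map_apply, id_eq,
        MeasurableEquiv.piFinSuccAbove_apply, Fin.insertNthEquiv, Equiv.coe_fn_symm_mk,
        Fin.removeNth, Fin.succAbove_zero, Set.mem_setOf_eq, Fin.succ_zero_eq_one]
    rw [hpre, mp.measure_preimage hTmeas.nullMeasurableSet]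
  rw [key, Measure.prod_apply hTmeas]
  have inner : ∀ a : E, (μ.prod piN) (Prod.mk a ⁻¹' T) = κ ^ n * μ (Prod.mk a ⁻¹' Φ) := by
    intro a
    rw [Measure.prod_apply (measurable_prodMk_left hTmeas)]
    have hslice : ∀ b : E, piN (Prod.mk b ⁻¹' (Prod.mk a ⁻¹' T)) =
        Set.indicator (Prod.mk a ⁻¹' Φ) (fun _ => κ ^ n) b := by
      intro b
      by_cases hab : (a, b) ∈ Φ
      · have : Prod.mk b ⁻¹' (Prod.mk a ⁻¹' T) = Set.pi univ (fun _ : Fin n => C a b) := by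
          ext y; simp [hT, hab, Set.mem_pi]
        rw [this, Measure.pi_pi, Set.indicator_of_mem (show b ∈ Prod.mk a ⁻¹' Φ from hab)]
        simp [hC a b hab, Finset.prod_const]
      · have : Prod.mk b ⁻¹' (Prod.mk a ⁻¹' T) = ∅ := by
          ext y; simp [hT, hab]
        rw [this, measure_empty, Set.indicator_of_notMem (show b ∉ Prod.mk a ⁻¹' Φ from hab)]
    simp_rw [hslice]
    rw [lintegral_indicator (measurable_prodMk_left hΦ), setLIntegral_const]
  simp_rw [inner]
  rw [lintegral_const_mul _ (measurable_measure_prodMk_left hΦ), Measure.prod_apply hΦ]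

lemma lim_aux (c : ℝ) :
    Tendsto (fun n : ℕ => (1 - c / ((n : ℝ) + 2)) ^ n) atTop (nhds (Real.exp (-c))) := by
  have h2 : Tendsto (fun n : ℕ => (1 + (-c) / ((n : ℝ) + 2)) ^ (n + 2)) atTop
      (nhds (Real.exp (-c))) := by
    have h1 := Real.tendsto_one_add_div_pow_exp (-c)
    have := h1.comp (tendsto_add_atTop_nat 2)
    refine this.congr fun n => ?_
    simp only [Function.comp_apply]
    push_cast
    ring_nf
  have hnat : Tendsto (fun n : ℕ => ((n : ℝ) + 2)) atTop atTop :=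
    tendsto_atTop_add_const_right _ 2 tendsto_natCast_atTop_atTop
  have h3 : Tendsto (fun n : ℕ => 1 + (-c) / ((n : ℝ) + 2)) atTop (nhds 1) := by
    have := Tendsto.div_atTop (tendsto_const_nhds (x := -c)) hnat
    simpa using (tendsto_const_nhds (x := (1:ℝ))).add this
  have h4 : Tendsto (fun n : ℕ => (1 + (-c) / ((n : ℝ) + 2)) ^ (n + 2) /
      (1 + (-c) / ((n : ℝ) + 2)) ^ 2) atTop (nhds (Real.exp (-c))) := by
    have := h2.div (h3.pow 2) (by norm_num)
    rw [one_pow, div_one] at this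
    exact this
  refine Tendsto.congr' ?_ h4
  have hev : ∀ᶠ n : ℕ in atTop, (0:ℝ) < 1 + (-c) / ((n : ℝ) + 2) :=
    h3.eventually (eventually_gt_nhds one_pos)
  filter_upwards [hev] with n hn
  have hne : (1 + (-c) / ((n : ℝ) + 2)) ≠ 0 := ne_of_gt hn
  rw [pow_add, mul_div_assoc, div_self (pow_ne_zero 2 hne), mul_one]
  congr 1
  ring

lemma fin_split {n : ℕ} (j : Fin (n + 2)) (h0 : j ≠ 0) (h1 : j ≠ 1) :
    ∃ k : Fin n, j = k.succ.succ := by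
  have hlt := j.isLt
  have hj0 : (j : ℕ) ≠ 0 := fun hc => h0 (Fin.ext (by simp [hc]))
  have hj1 : (j : ℕ) ≠ 1 := fun hc => h1 (Fin.ext (by simp [hc, Fin.val_one]))
  refine ⟨⟨(j : ℕ) - 2, by omega⟩, ?_⟩
  apply Fin.ext
  simp only [Fin.val_succ]
  omega

lemma unifDisk_ball_pos (Rn h : ℝ) (hh : 0 < h) (p : E) (hp : ‖p‖ + h ≤ Rn) :
    unifDisk Rn (Metric.ball p h) ≠ 0 := by
  have hR0 : 0 ≤ Rn := by
    have := norm_nonneg p; linarith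
  rw [unifDisk_apply Rn hR0 _ measurableSet_ball]
  have hsub : Metric.ball p h ⊆ Metric.closedBall (0 : E) Rn := by
    refine Metric.ball_subset_closedBall.trans (Metric.closedBall_subset_closedBall' ?_)
    rw [dist_zero_right]; linarith
  rw [Set.inter_eq_self_of_subset_left hsub, vol_ball' _ _ hh.le]
  apply mul_ne_zero
  · rw [Ne, ENNReal.inv_eq_zero]
    exact ENNReal.ofReal_ne_top
  · simp only [Ne, ENNReal.ofReal_eq_zero, not_le]
    positivity

lemma prod_pos (Rn h rT : ℝ) (hh : 0 < h) (hrT : 0 ≤ rT) (hR5 : rT + 5 * h ≤ Rn) :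
    ((unifDisk Rn).prod (unifDisk Rn)) {p : E × E |
      (rT + 2 * h ≤ ‖p.1‖ ∧ ‖p.1‖ ≤ Rn - h) ∧ (rT + 2 * h ≤ ‖p.2‖ ∧ ‖p.2‖ ≤ Rn - h) ∧
      2 * h < dist p.1 p.2} ≠ 0 := by
  haveI := unifDisk_prob Rn (by linarith)
  obtain ⟨p, hp⟩ := exists_norm_eq (EuclideanSpace ℝ (Fin 2))
    (show (0:ℝ) ≤ rT + 3 * h by linarith)
  set q : E := -p with hq
  have hqn : ‖q‖ = rT + 3 * h := by rw [hq, norm_neg, hp]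
  have hpq : dist p q = 2 * (rT + 3 * h) := by
    have h2p : p - q = (2 : ℝ) • p := by
      rw [hq, sub_neg_eq_add, two_smul]
    rw [dist_eq_norm, h2p, norm_smul, hp]
    simp only [Real.norm_ofNat]
  have hsub : Metric.ball p h ×ˢ Metric.ball q h ⊆ {p : E × E |
      (rT + 2 * h ≤ ‖p.1‖ ∧ ‖p.1‖ ≤ Rn - h) ∧ (rT + 2 * h ≤ ‖p.2‖ ∧ ‖p.2‖ ≤ Rn - h) ∧
      2 * h < dist p.1 p.2} := by
    rintro ⟨a, b⟩ ⟨ha, hb⟩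
    rw [Metric.mem_ball] at ha hb
    have ha1 : |‖a‖ - ‖p‖| < h :=
      (abs_norm_sub_norm_le a p).trans_lt (by rw [← dist_eq_norm]; exact ha)
    have hb1 : |‖b‖ - ‖q‖| < h :=
      (abs_norm_sub_norm_le b q).trans_lt (by rw [← dist_eq_norm]; exact hb)
    obtain ⟨ha2, ha3⟩ := abs_lt.mp ha1
    obtain ⟨hb2, hb3⟩ := abs_lt.mp hb1
    have htri := dist_triangle4 p a b q
    have hpa : dist p a < h := by rwa [dist_comm]
    rw [hp] at ha2 ha3
    rw [hqn] at hb2 hb3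
    refine ⟨⟨by simp only; linarith, by simp only; linarith⟩,
       ⟨by simp only; linarith, by simp only; linarith⟩, ?_⟩
    rw [hpq] at htri
    simp only
    linarith
  intro h0
  have hle := measure_mono (μ := (unifDisk Rn).prod (unifDisk Rn)) hsub
  rw [h0, le_zero_iff, Measure.prod_prod] at hle
  rcases mul_eq_zero.mp hle with hz | hz
  · exact unifDisk_ball_pos Rn h hh p (by rw [hp]; linarith) hz
  · exact unifDisk_ball_pos Rn h hh q (by rw [hqn]; linarith) hz


set_option maxHeartbeats 2000000 in
/-- HC-I, joint conditional.  Fix `ρ_p > 0`, `h > 0`, `X_T ∈ ℝ²` with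
`r_T = |X_T|`.  For each `n ≥ 2` let `R_n = √(n/(π ρ_p))` and `X_1, …, X_n` i.i.d.
uniform on the closed disk of radius `R_n`; `P_i = 1` iff `|X_i − X_T| ≥ h` and
`|X_i − X_j| ≥ h` for every `j ≠ i`; `𝒜_n` is the event that `X_1, X_2` lie in the
annulus `{x : r_T + 2h ≤ |x| ≤ R_n − h}` and `|X_1 − X_2| > 2h`.  Then
`Pr(P_1 = 1 ∧ P_2 = 1 | 𝒜_n) → exp(−2π ρ_p h²)`. -/
theorem stmt9 (ρp h : ℝ) (hρp : 0 < ρp) (hh : 0 < h)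
    (XT : EuclideanSpace ℝ (Fin 2)) (rT : ℝ) (hrT : rT = ‖XT‖)
    (R : ℕ → ℝ) (hR : ∀ n : ℕ, R n = Real.sqrt (n / (π * ρp)))
    (Ω : ℕ → Type) [∀ n, MeasurableSpace (Ω n)]
    (P : (n : ℕ) → Measure (Ω n)) (hprob : ∀ n, IsProbabilityMeasure (P n))
    (X : (n : ℕ) → Fin n → Ω n → EuclideanSpace ℝ (Fin 2))
    (hmeas : ∀ n i, Measurable (X n i))
    (hindep : ∀ n, iIndepFun (X n) (P n))
    (hlaw : ∀ n (i : Fin n), (P n).map (X n i) = unifDisk (R n)) :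
    Tendsto
      (fun n : ℕ =>
        (((P (n + 2))[|{ω | (rT + 2 * h ≤ ‖X (n + 2) 0 ω‖ ∧ ‖X (n + 2) 0 ω‖ ≤ R (n + 2) - h) ∧
            (rT + 2 * h ≤ ‖X (n + 2) 1 ω‖ ∧ ‖X (n + 2) 1 ω‖ ≤ R (n + 2) - h) ∧
            2 * h < dist (X (n + 2) 0 ω) (X (n + 2) 1 ω)}])
          {ω | (h ≤ dist (X (n + 2) 0 ω) XT ∧
              ∀ j : Fin (n + 2), j ≠ 0 → h ≤ dist (X (n + 2) 0 ω) (X (n + 2) j ω)) ∧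
            (h ≤ dist (X (n + 2) 1 ω) XT ∧
              ∀ j : Fin (n + 2), j ≠ 1 → h ≤ dist (X (n + 2) 1 ω) (X (n + 2) j ω))}).toReal)
      atTop (nhds (Real.exp (-(2 * π * ρp * h ^ 2)))) := by
  have hrT0 : 0 ≤ rT := hrT ▸ norm_nonneg XT
  set c : ℝ := 2 * π * ρp * h ^ 2 with hc
  refine Tendsto.congr' ?_ (lim_aux c)
  have hπρ : 0 < π * ρp := by positivity
  have hev : ∀ᶠ n : ℕ in atTop, rT + 5 * h ≤ R (n + 2) := by
    have hRt : Tendsto (fun n : ℕ => ((n : ℝ) + 2) / (π * ρp)) atTop atTop :=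
      (tendsto_atTop_add_const_right _ 2 tendsto_natCast_atTop_atTop).atTop_div_const hπρ
    filter_upwards [hRt.eventually_ge_atTop ((rT + 5 * h) ^ 2)] with n hn
    rw [hR]
    have hcast : ((n + 2 : ℕ) : ℝ) = (n : ℝ) + 2 := by push_cast; ring
    rw [hcast]
    calc rT + 5 * h = Real.sqrt ((rT + 5 * h) ^ 2) := (Real.sqrt_sq (by linarith)).symm
      _ ≤ _ := Real.sqrt_le_sqrt hn
  filter_upwards [hev] with n hn
  -- basic facts
  have hRpos : 0 < R (n + 2) := by linarith
  have hRn2 : (R (n + 2)) ^ 2 = ((n : ℝ) + 2) / (π * ρp) := by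
    rw [hR, Real.sq_sqrt (by positivity)]
    push_cast; ring
  set μ := unifDisk (R (n + 2)) with hμ
  haveI : IsProbabilityMeasure μ := unifDisk_prob _ hRpos
  haveI : IsProbabilityMeasure (P (n + 2)) := hprob (n + 2)
  set Φ : Set (EuclideanSpace ℝ (Fin 2) × EuclideanSpace ℝ (Fin 2)) :=
    {p | (rT + 2 * h ≤ ‖p.1‖ ∧ ‖p.1‖ ≤ R (n + 2) - h) ∧
      (rT + 2 * h ≤ ‖p.2‖ ∧ ‖p.2‖ ≤ R (n + 2) - h) ∧ 2 * h < dist p.1 p.2} with hΦdef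
  have hΦmeas : MeasurableSet Φ := by
    rw [hΦdef]
    exact (((measurableSet_le measurable_const measurable_fst.norm).inter
        (measurableSet_le measurable_fst.norm measurable_const)).inter
      (((measurableSet_le measurable_const measurable_snd.norm).inter
        (measurableSet_le measurable_snd.norm measurable_const)).inter
      (measurableSet_lt measurable_const (measurable_fst.dist measurable_snd))))
  set C : EuclideanSpace ℝ (Fin 2) → EuclideanSpace ℝ (Fin 2) → Set (EuclideanSpace ℝ (Fin 2)) :=
    fun a b => {x | h ≤ dist a x ∧ h ≤ dist b x} with hCdef
  have hCmeas : MeasurableSet {p : (EuclideanSpace ℝ (Fin 2) × EuclideanSpace ℝ (Fin 2)) ×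
      EuclideanSpace ℝ (Fin 2) | p.2 ∈ C p.1.1 p.1.2} :=
    (measurableSet_le measurable_const (measurable_fst.fst.dist measurable_snd)).inter
      (measurableSet_le measurable_const (measurable_fst.snd.dist measurable_snd))
  set κ : ENNReal := (ENNReal.ofReal (π * (R (n + 2)) ^ 2))⁻¹ *
    ENNReal.ofReal (π * (R (n + 2)) ^ 2 - 2 * (π * h ^ 2)) with hκdef
  have hκ : ∀ a b : EuclideanSpace ℝ (Fin 2), (a, b) ∈ Φ → μ (C a b) = κ := by
    intro a b hab
    rw [hΦdef] at hab
    obtain ⟨⟨h1, h2⟩, ⟨h3, h4⟩, h5⟩ := hab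
    exact unifDisk_good _ h hh hRpos.le a b (by linarith) (by linarith) h5
  -- the joint law
  set Y : Ω (n + 2) → (Fin (n + 2) → EuclideanSpace ℝ (Fin 2)) :=
    fun ω i => X (n + 2) i ω with hYdef
  have hY : Measurable Y := measurable_pi_lambda _ (hmeas (n + 2))
  have hmap : (P (n + 2)).map Y = Measure.pi (fun _ : Fin (n + 2) => μ) :=
    map_eq_pi (P (n + 2)) μ (X (n + 2)) (hmeas (n + 2)) (hindep (n + 2)) (fun i => hlaw (n + 2) i)
  -- the pi-space events
  set BA : Set (Fin (n + 2) → EuclideanSpace ℝ (Fin 2)) :=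
    {f | (f 0, f 1) ∈ Φ ∧ ∀ j : Fin n, f j.succ.succ ∈ (univ : Set (EuclideanSpace ℝ (Fin 2)))}
      with hBAdef
  set BT : Set (Fin (n + 2) → EuclideanSpace ℝ (Fin 2)) :=
    {f | (f 0, f 1) ∈ Φ ∧ ∀ j : Fin n, f j.succ.succ ∈ C (f 0) (f 1)} with hBTdef
  have hBAmeas : MeasurableSet BA := by
    have : BA = (fun f : Fin (n + 2) → EuclideanSpace ℝ (Fin 2) => (f 0, f 1)) ⁻¹' Φ := by
      ext f; simp [hBAdef]
    rw [this]
    exact hΦmeas.preimage ((measurable_pi_apply 0).prodMk (measurable_pi_apply 1))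
  have hBTmeas : MeasurableSet BT := by
    have : BT = ((fun f : Fin (n + 2) → EuclideanSpace ℝ (Fin 2) => (f 0, f 1)) ⁻¹' Φ) ∩
        ⋂ j : Fin n, (fun f : Fin (n + 2) → EuclideanSpace ℝ (Fin 2) => ((f 0, f 1), f j.succ.succ))
          ⁻¹' {p : (EuclideanSpace ℝ (Fin 2) × EuclideanSpace ℝ (Fin 2)) ×
            EuclideanSpace ℝ (Fin 2) | p.2 ∈ C p.1.1 p.1.2} := by
      ext f; simp [hBTdef]
    rw [this]
    exact (hΦmeas.preimage ((measurable_pi_apply 0).prodMk (measurable_pi_apply 1))).inter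
      (MeasurableSet.iInter fun j => hCmeas.preimage
        (((measurable_pi_apply 0).prodMk (measurable_pi_apply 1)).prodMk
          (measurable_pi_apply j.succ.succ)))
  -- identify the events
  have hAeq : {ω | (rT + 2 * h ≤ ‖X (n + 2) 0 ω‖ ∧ ‖X (n + 2) 0 ω‖ ≤ R (n + 2) - h) ∧
      (rT + 2 * h ≤ ‖X (n + 2) 1 ω‖ ∧ ‖X (n + 2) 1 ω‖ ≤ R (n + 2) - h) ∧
      2 * h < dist (X (n + 2) 0 ω) (X (n + 2) 1 ω)} = Y ⁻¹' BA := by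
    ext ω
    simp only [hBAdef, Set.mem_preimage, Set.mem_setOf_eq, Set.mem_univ, and_true, hΦdef, hYdef,
      forall_const]
    tauto
  have hSeq : {ω | (rT + 2 * h ≤ ‖X (n + 2) 0 ω‖ ∧ ‖X (n + 2) 0 ω‖ ≤ R (n + 2) - h) ∧
      (rT + 2 * h ≤ ‖X (n + 2) 1 ω‖ ∧ ‖X (n + 2) 1 ω‖ ≤ R (n + 2) - h) ∧
      2 * h < dist (X (n + 2) 0 ω) (X (n + 2) 1 ω)} ∩
      {ω | (h ≤ dist (X (n + 2) 0 ω) XT ∧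
          ∀ j : Fin (n + 2), j ≠ 0 → h ≤ dist (X (n + 2) 0 ω) (X (n + 2) j ω)) ∧
        (h ≤ dist (X (n + 2) 1 ω) XT ∧
          ∀ j : Fin (n + 2), j ≠ 1 → h ≤ dist (X (n + 2) 1 ω) (X (n + 2) j ω))} = Y ⁻¹' BT := by
    ext ω
    simp only [hBTdef, Set.mem_preimage, Set.mem_inter_iff, Set.mem_setOf_eq, hΦdef, hCdef, hYdef]
    constructor
    · rintro ⟨hA, ⟨⟨_, hS0⟩, ⟨_, hS1⟩⟩⟩
      refine ⟨hA, fun j => ⟨hS0 j.succ.succ (Fin.succ_ne_zero _), hS1 j.succ.succ ?_⟩⟩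
      intro heq
      exact Fin.succ_ne_zero j (Fin.succ_injective _ (heq.trans Fin.succ_zero_eq_one.symm))
    · rintro ⟨hA, hT⟩
      obtain ⟨⟨hA1, hA2⟩, ⟨hA3, hA4⟩, hA5⟩ := hA
      have hd0T : h ≤ dist (X (n + 2) 0 ω) XT := by
        have hns : ‖X (n + 2) 0 ω‖ - ‖XT‖ ≤ dist (X (n + 2) 0 ω) XT := by
          rw [dist_eq_norm]; exact norm_sub_norm_le _ _
        rw [← hrT] at hns
        linarith
      have hd1T : h ≤ dist (X (n + 2) 1 ω) XT := by
        have hns : ‖X (n + 2) 1 ω‖ - ‖XT‖ ≤ dist (X (n + 2) 1 ω) XT := by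
          rw [dist_eq_norm]; exact norm_sub_norm_le _ _
        rw [← hrT] at hns
        linarith
      refine ⟨⟨⟨hA1, hA2⟩, ⟨hA3, hA4⟩, hA5⟩, ⟨hd0T, fun j hj => ?_⟩, ⟨hd1T, fun j hj => ?_⟩⟩
      · by_cases hj1 : j = 1
        · subst hj1; linarith
        · obtain ⟨k, rfl⟩ := fin_split j hj hj1
          exact (hT k).1
      · by_cases hj0 : j = 0
        · subst hj0
          rw [dist_comm]
          linarith
        · obtain ⟨k, rfl⟩ := fin_split j hj0 hj
          exact (hT k).2
  have hAmeas : MeasurableSet {ω | (rT + 2 * h ≤ ‖X (n + 2) 0 ω‖ ∧ ‖X (n + 2) 0 ω‖ ≤ R (n + 2) - h) ∧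
      (rT + 2 * h ≤ ‖X (n + 2) 1 ω‖ ∧ ‖X (n + 2) 1 ω‖ ≤ R (n + 2) - h) ∧
      2 * h < dist (X (n + 2) 0 ω) (X (n + 2) 1 ω)} := by
    rw [hAeq]; exact hBAmeas.preimage hY
  -- compute the two probabilities
  have hPA : P (n + 2) (Y ⁻¹' BA) = (μ.prod μ) Φ := by
    rw [← Measure.map_apply hY hBAmeas, hmap, hBAdef,
      pi_two_rest μ n Φ hΦmeas (fun _ _ => univ) (by simpa using MeasurableSet.univ) 1
        (fun a b _ => measure_univ), one_pow, one_mul]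
  have hPT : P (n + 2) (Y ⁻¹' BT) = κ ^ n * (μ.prod μ) Φ := by
    rw [← Measure.map_apply hY hBTmeas, hmap, hBTdef, pi_two_rest μ n Φ hΦmeas C hCmeas κ hκ]
  have hΦ0 : (μ.prod μ) Φ ≠ 0 := by
    rw [hμ, hΦdef]
    exact prod_pos (R (n + 2)) h rT hh hrT0 hn
  have hΦtop : (μ.prod μ) Φ ≠ ⊤ := measure_ne_top _ _
  -- put it together
  rw [cond_apply hAmeas, hSeq, hAeq, hPA, hPT, mul_comm (κ ^ n) _, ← mul_assoc,
    ENNReal.inv_mul_cancel hΦ0 hΦtop, one_mul, ENNReal.toReal_pow]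
  congr 1
  have h2h : 0 ≤ π * (R (n + 2)) ^ 2 - 2 * (π * h ^ 2) := by
    have h5 : 5 * h ≤ R (n + 2) := by linarith
    have hsq : (0:ℝ) ≤ R (n + 2) ^ 2 - 2 * h ^ 2 := by nlinarith
    nlinarith [Real.pi_pos]
  rw [hκdef, ENNReal.toReal_mul, ENNReal.toReal_inv, ENNReal.toReal_ofReal (by positivity),
    ENNReal.toReal_ofReal h2h]
  have hπR : π * (R (n + 2)) ^ 2 = ((n : ℝ) + 2) / ρp := by
    rw [hRn2]; field_simp
  rw [hπR, hc]
  have hn2 : ((n : ℝ) + 2) ≠ 0 := by positivity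
  field_simp
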